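/- Let (g, ⟨,⟩_g) be a finite-dimensional quadratic Lie algebra (the bilinear form is symmetric, non-degenerate, and invariant), and let r^♭_± : g → g be linear maps satisfying r^♭_+ − r^♭_- = Id_g and ⟨r^♭_+(x₁), x₂⟩_g + ⟨x₁, r^♭_-(x₂)⟩_g = 0 for all x₁, x₂ ∈ g. Set f_+ = Im(r^♭_+) and f_- = Im(r^♭_-). Then ker(r^♭_+) = f_-^⊥, ker(r^♭_-) = f_+^⊥, f_+^⊥ ⊆ f_+, and f_-^⊥ ⊆ f_-. -/

import Mathlib

/-- for a finite-dimensional quadratic Lie algebra `(g, ⟨,⟩)` and linear maps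
`r♭₊ - r♭₋ = id` with `⟨r♭₊ x₁, x₂⟩ + ⟨x₁, r♭₋ x₂⟩ = 0`, setting `f± = Im r♭±`, one has
`ker r♭₊ = f₋^⊥`, `ker r♭₋ = f₊^⊥`, `f₊^⊥ ⊆ f₊`, `f₋^⊥ ⊆ f₋`. -/
theorem stmt2 {k g : Type*} [Field k] [LieRing g] [LieAlgebra k g] [FiniteDimensional k g]
    (B : LinearMap.BilinForm k g)
    (hsym : ∀ a b : g, B a b = B b a)
    (hnondeg : B.Nondegenerate)
    (hinv : ∀ a b c : g, B ⁅a, b⁆ c = B a ⁅b, c⁆)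
    (rp rm : g →ₗ[k] g)
    (hdiff : rp - rm = LinearMap.id)
    (hadj : ∀ a b : g, B (rp a) b + B a (rm b) = 0) :
    LinearMap.ker rp = B.orthogonal (LinearMap.range rm)
    ∧ LinearMap.ker rm = B.orthogonal (LinearMap.range rp)
    ∧ B.orthogonal (LinearMap.range rp) ≤ LinearMap.range rp
    ∧ B.orthogonal (LinearMap.range rm) ≤ LinearMap.range rm := by
  have hdiff' : ∀ x : g, rp x - rm x = x := by
    intro x
    have := congrArg (fun f : g →ₗ[k] g => f x) hdiff
    simpa using this
  have h1 : LinearMap.ker rp = B.orthogonal (LinearMap.range rm) := by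
    ext x
    simp only [LinearMap.mem_ker, LinearMap.BilinForm.mem_orthogonal_iff]
    constructor
    · rintro hx n ⟨b, rfl⟩
      have := hadj x b
      rw [hx] at this
      simp only [map_zero, LinearMap.zero_apply, zero_add] at this
      rw [hsym]
      exact this
    · intro h
      apply hnondeg.1
      intro b
      have h2 := hadj x b
      have h3 : B x (rm b) = 0 := by
        have := h (rm b) ⟨b, rfl⟩
        rw [hsym]; exact this
      linear_combination h2 - h3
  have h2 : LinearMap.ker rm = B.orthogonal (LinearMap.range rp) := by
    ext x
    simp only [LinearMap.mem_ker, LinearMap.BilinForm.mem_orthogonal_iff]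
    constructor
    · rintro hx n ⟨a, rfl⟩
      have := hadj a x
      rw [hx] at this
      simp only [map_zero, zero_add, add_zero] at this
      exact this
    · intro h
      apply hnondeg.1
      intro a
      have h3 : B (rp a) x = 0 := h (rp a) ⟨a, rfl⟩
      have h4 := hadj a x
      rw [hsym]
      linear_combination h4 - h3
  refine ⟨h1, h2, ?_, ?_⟩
  · intro x hx
    rw [← h2, LinearMap.mem_ker] at hx
    refine ⟨x, ?_⟩
    have := hdiff' x
    rwa [hx, sub_zero] at this
  · intro x hx
    rw [← h1, LinearMap.mem_ker] at hx
    refine ⟨-x, ?_⟩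
    have := hdiff' x
    rw [hx, zero_sub] at this
    rw [map_neg]
    exact this
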